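/- Every Garside group is torsion free: if G = G(M) is the group of fractions of a Garside monoid M and α ∈ G satisfies α^n = 1 for some n ≥ 1, then α = 1. -/

import Mathlib

/-- Left divisibility in a monoid: `a ≤_L b` iff `ac = b` for some `c`. -/
def divL {M : Type*} [Monoid M] (a b : M) : Prop := ∃ c : M, a * c = b

/-- Right divisibility in a monoid: `a ≤_R b` iff `ca = b` for some `c`. -/
def divR {M : Type*} [Monoid M] (a b : M) : Prop := ∃ c : M, c * a = b

/-- `M` is a Garside monoid: atomic, finitely generated, cancelative, the left
and right divisibility orders are lattices, and there is a Garside element `Δ`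
whose sets of left and of right divisors coincide and generate `M`. -/
structure IsGarsideMonoid (M : Type*) [Monoid M] : Prop where
  atomic : ∃ ν : M → ℕ, (∀ a : M, ν a = 0 ↔ a = 1) ∧
    ∀ a b : M, ν a + ν b ≤ ν (a * b)
  finGen : ∃ T : Finset M, Submonoid.closure (T : Set M) = ⊤
  cancel : ∀ a b b' c : M, a * b * c = a * b' * c → b = b'
  meetL : ∀ a b : M, ∃ d : M, divL d a ∧ divL d b ∧
    ∀ e : M, divL e a → divL e b → divL e d
  joinL : ∀ a b : M, ∃ u : M, divL a u ∧ divL b u ∧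
    ∀ v : M, divL a v → divL b v → divL u v
  meetR : ∀ a b : M, ∃ d : M, divR d a ∧ divR d b ∧
    ∀ e : M, divR e a → divR e b → divR e d
  joinR : ∀ a b : M, ∃ u : M, divR a u ∧ divR b u ∧
    ∀ v : M, divR a v → divR b v → divR u v
  garside : ∃ Δ : M, {a : M | divL a Δ} = {a : M | divR a Δ} ∧
    Submonoid.closure {a : M | divL a Δ} = ⊤

/-- The defining relations of the group of fractions `G(M)` of a monoid `M`:
generators all elements of `M`, relations `α·β = αβ`. -/
def fracRels (M : Type*) [Monoid M] : Set (FreeGroup M) :=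
  ⋃ (a : M) (b : M), {FreeGroup.of a * FreeGroup.of b * (FreeGroup.of (a * b))⁻¹}

/-- The group of fractions `G(M)` of a monoid `M`. -/
abbrev FracGroup (M : Type*) [Monoid M] := PresentedGroup (fracRels M)

namespace GarsideAux

variable {M : Type*} [Monoid M]

theorem mul_left_cancel' (hM : IsGarsideMonoid M) {a b c : M} (h : a * b = a * c) : b = c :=
  hM.cancel a b c 1 (by simpa using h)

theorem mul_right_cancel' (hM : IsGarsideMonoid M) {a b c : M} (h : a * c = b * c) : a = b :=
  hM.cancel 1 a b c (by simpa using h)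

theorem eq_one_of_mul_eq_one (hM : IsGarsideMonoid M) {a b : M} (h : a * b = 1) :
    a = 1 ∧ b = 1 := by
  obtain ⟨ν, h1, h2⟩ := hM.atomic
  have hz : ν (a * b) = 0 := by rw [h]; exact (h1 1).2 rfl
  have hab := h2 a b
  constructor
  · exact (h1 a).1 (by omega)
  · exact (h1 b).1 (by omega)

/-- Common left multiples exist. -/
theorem clm (hM : IsGarsideMonoid M) (a b : M) : ∃ u v : M, u * a = v * b := by
  obtain ⟨w, ⟨u, hu⟩, ⟨v, hv⟩, -⟩ := hM.joinR a b
  exact ⟨u, v, hu.trans hv.symm⟩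

/-- The whole monoid is a left Ore set in a Garside monoid. -/
noncomputable def oreTop (hM : IsGarsideMonoid M) : OreLocalization.OreSet (⊤ : Submonoid M) where
  ore_right_cancel r₁ r₂ s h := ⟨1, by simp only [Submonoid.coe_one, one_mul]; exact mul_right_cancel' hM h⟩
  oreNum r s := (clm hM r (s : M)).choose_spec.choose
  oreDenom r s := ⟨(clm hM r (s : M)).choose, trivial⟩
  ore_eq r s := (clm hM r (s : M)).choose_spec.choose_spec

theorem of_mul (a b : M) :
    (PresentedGroup.of a * PresentedGroup.of b : FracGroup M) = PresentedGroup.of (a * b) := by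
  have hmem : FreeGroup.of a * FreeGroup.of b * (FreeGroup.of (a * b))⁻¹ ∈ fracRels M := by
    simp only [fracRels, Set.mem_iUnion, Set.mem_singleton_iff]
    exact ⟨a, b, rfl⟩
  have h1 : PresentedGroup.mk (fracRels M)
      (FreeGroup.of a * FreeGroup.of b * (FreeGroup.of (a * b))⁻¹) = 1 :=
    (QuotientGroup.eq_one_iff _).2 (Subgroup.subset_normalClosure hmem)
  rw [map_mul, map_inv] at h1
  exact mul_inv_eq_one.mp h1

/-- The canonical monoid homomorphism `M →* G(M)`. -/
def pi (M : Type*) [Monoid M] : M →* FracGroup M where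
  toFun := PresentedGroup.of
  map_one' := by
    have h := of_mul (M := M) 1 1
    rw [mul_one] at h
    exact mul_eq_left.mp h
  map_mul' a b := (of_mul a b).symm

theorem pi_injective (hM : IsGarsideMonoid M) : Function.Injective (pi M) := by
  letI := oreTop hM
  set f : M → (OreLocalization (⊤ : Submonoid M) M)ˣ :=
    fun r => OreLocalization.numeratorUnit (⟨r, trivial⟩ : (⊤ : Submonoid M)) with hf
  have hfmul : ∀ a b : M, f a * f b = f (a * b) := by
    intro a b
    apply Units.ext
    rw [Units.val_mul]
    exact (map_mul (OreLocalization.numeratorHom (S := (⊤ : Submonoid M))) a b).symm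
  have hrel : ∀ r ∈ fracRels M, FreeGroup.lift f r = 1 := by
    intro r hr
    simp only [fracRels, Set.mem_iUnion, Set.mem_singleton_iff] at hr
    obtain ⟨a, b, rfl⟩ := hr
    rw [map_mul, map_mul, map_inv, FreeGroup.lift_apply_of, FreeGroup.lift_apply_of, FreeGroup.lift_apply_of,
      mul_inv_eq_one]
    exact hfmul a b
  have hfinj : Function.Injective f := by
    intro a b hab
    have hval : ((a : M) /ₒ (1 : (⊤ : Submonoid M))) = ((b : M) /ₒ (1 : (⊤ : Submonoid M))) :=
      congrArg Units.val hab
    rw [OreLocalization.oreDiv_eq_iff] at hval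
    obtain ⟨u, v, h₁, h₂⟩ := hval
    rw [Submonoid.coe_one, mul_one, mul_one] at h₂
    simp only [Submonoid.smul_def, smul_eq_mul] at h₁
    -- h₁ : ↑u * b = v * a, h₂ : ↑u = v
    rw [← h₂] at h₁
    exact (mul_left_cancel' hM h₁).symm
  intro a b hab
  have hφ := congrArg (PresentedGroup.toGroup hrel) hab
  rw [show pi M a = PresentedGroup.of a from rfl, show pi M b = PresentedGroup.of b from rfl,
    PresentedGroup.toGroup.of, PresentedGroup.toGroup.of] at hφ
  exact hfinj hφ

/-- Every element of the fraction group is a left fraction. -/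
theorem exists_repr (hM : IsGarsideMonoid M) (g : FracGroup M) :
    ∃ a b : M, g = (pi M a)⁻¹ * pi M b := by
  let H : Subgroup (FracGroup M) :=
    { carrier := {g | ∃ a b : M, g = (pi M a)⁻¹ * pi M b}
      one_mem' := ⟨1, 1, by simp⟩
      mul_mem' := by
        rintro x y ⟨a, b, rfl⟩ ⟨c, d, rfl⟩
        obtain ⟨u, v, huv⟩ := clm hM b c
        have h1 : pi M u * pi M b = pi M v * pi M c := by
          rw [← map_mul, ← map_mul, huv]
        have h2 : pi M b * (pi M c)⁻¹ = (pi M u)⁻¹ * pi M v := by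
          calc pi M b * (pi M c)⁻¹
              = (pi M u)⁻¹ * (pi M u * pi M b) * (pi M c)⁻¹ := by group
            _ = (pi M u)⁻¹ * (pi M v * pi M c) * (pi M c)⁻¹ := by rw [h1]
            _ = (pi M u)⁻¹ * pi M v := by group
        refine ⟨u * a, v * d, ?_⟩
        rw [map_mul, map_mul, mul_inv_rev]
        calc (pi M a)⁻¹ * pi M b * ((pi M c)⁻¹ * pi M d)
            = (pi M a)⁻¹ * (pi M b * (pi M c)⁻¹) * pi M d := by group
          _ = (pi M a)⁻¹ * ((pi M u)⁻¹ * pi M v) * pi M d := by rw [h2]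
          _ = (pi M a)⁻¹ * (pi M u)⁻¹ * (pi M v * pi M d) := by group
      inv_mem' := by
        rintro x ⟨a, b, rfl⟩
        exact ⟨b, a, by rw [mul_inv_rev, inv_inv]⟩ }
  exact PresentedGroup.generated_by _ H (fun j => ⟨1, j, by rw [map_one, inv_one, one_mul]; rfl⟩) g

/-- The extension of left divisibility to the fraction group. -/
def gle (g h : FracGroup M) : Prop := ∃ m : M, g * pi M m = h

theorem gle_trans {g h k : FracGroup M} (h₁ : gle g h) (h₂ : gle h k) : gle g k := by
  obtain ⟨m, hm⟩ := h₁
  obtain ⟨m', hm'⟩ := h₂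
  exact ⟨m * m', by rw [map_mul, ← mul_assoc, hm, hm']⟩

theorem gle_mul_left (w : FracGroup M) {g h : FracGroup M} (h₁ : gle g h) :
    gle (w * g) (w * h) := by
  obtain ⟨m, hm⟩ := h₁
  exact ⟨m, by rw [mul_assoc, hm]⟩

theorem gle_antisymm (hM : IsGarsideMonoid M) {g h : FracGroup M}
    (h₁ : gle g h) (h₂ : gle h g) : g = h := by
  obtain ⟨m, hm⟩ := h₁
  obtain ⟨m', hm'⟩ := h₂
  have hgg : g * (pi M m * pi M m') = g := by rw [← mul_assoc, hm, hm']
  have h1 : pi M (m * m') = 1 := by rw [map_mul]; exact mul_eq_left.mp hgg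
  have h2 : m * m' = 1 := pi_injective hM (by rw [h1, map_one])
  have hm1 : m = 1 := (eq_one_of_mul_eq_one hM h2).1
  rw [← hm, hm1, map_one, mul_one]

/-- Any two elements of the fraction group have a common left denominator. -/
theorem exists_common (hM : IsGarsideMonoid M) (g h : FracGroup M) :
    ∃ c a b : M, g = (pi M c)⁻¹ * pi M a ∧ h = (pi M c)⁻¹ * pi M b := by
  obtain ⟨p, q, rfl⟩ := exists_repr hM g
  obtain ⟨r, s, rfl⟩ := exists_repr hM h
  obtain ⟨u, v, huv⟩ := clm hM p r
  refine ⟨u * p, u * q, v * s, ?_, ?_⟩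
  · rw [map_mul, map_mul, mul_inv_rev]
    group
  · calc (pi M r)⁻¹ * pi M s
        = (pi M (v * r))⁻¹ * (pi M v * pi M s) := by rw [map_mul, mul_inv_rev]; group
      _ = (pi M (u * p))⁻¹ * pi M (v * s) := by rw [← huv, map_mul (pi M) v s]

/-- Any two elements of the fraction group have a least upper bound for `gle`. -/
theorem exists_lub (hM : IsGarsideMonoid M) (g h : FracGroup M) :
    ∃ j : FracGroup M, gle g j ∧ gle h j ∧ ∀ k, gle g k → gle h k → gle j k := by
  obtain ⟨c, a, b, rfl, rfl⟩ := exists_common hM g h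
  obtain ⟨w, ⟨x, hx⟩, ⟨y, hy⟩, hmin⟩ := hM.joinL a b
  refine ⟨(pi M c)⁻¹ * pi M w, ⟨x, ?_⟩, ⟨y, ?_⟩, ?_⟩
  · rw [mul_assoc, ← map_mul, hx]
  · rw [mul_assoc, ← map_mul, hy]
  · rintro k ⟨s, hs⟩ ⟨t, ht⟩
    have hst : pi M (a * s) = pi M (b * t) := by
      rw [map_mul, map_mul]
      refine mul_left_cancel (a := (pi M c)⁻¹) ?_
      rw [← mul_assoc, ← mul_assoc]
      exact hs.trans ht.symm
    have hv : a * s = b * t := pi_injective hM hst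
    obtain ⟨z, hz⟩ := hmin (a * s) ⟨s, rfl⟩ ⟨t, hv.symm⟩
    refine ⟨z, ?_⟩
    calc (pi M c)⁻¹ * pi M w * pi M z
        = (pi M c)⁻¹ * pi M (w * z) := by rw [mul_assoc, map_mul]
      _ = (pi M c)⁻¹ * pi M a * pi M s := by rw [hz, map_mul, mul_assoc]
      _ = k := hs

end GarsideAux

open GarsideAux in
/-- Every Garside group is torsion free: if `G = G(M)` is the group of
fractions of a Garside monoid `M` and `α ∈ G` satisfies `α^n = 1` for some
`n ≥ 1`, then `α = 1`. -/
theorem garside_group_torsion_free {M : Type*} [Monoid M]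
    (hM : IsGarsideMonoid M) (α : FracGroup M) (n : ℕ) (hn : 1 ≤ n)
    (h : α ^ n = 1) : α = 1 := by
  classical
  have key : ∀ k : ℕ, ∃ β : FracGroup M, (∀ i ≤ k, gle (α ^ i) β) ∧
      ∀ γ, (∀ i ≤ k, gle (α ^ i) γ) → gle β γ := by
    intro k
    induction k with
    | zero =>
      refine ⟨1, ?_, ?_⟩
      · intro i hi
        have hi0 : i = 0 := Nat.le_zero.mp hi
        subst hi0
        exact ⟨1, by rw [pow_zero, map_one, mul_one]⟩
      · intro γ hγ
        have := hγ 0 le_rfl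
        rwa [pow_zero] at this
    | succ k ih =>
      obtain ⟨β, hub, hleast⟩ := ih
      obtain ⟨j, h1, h2, h3⟩ := exists_lub hM (α ^ (k + 1)) β
      refine ⟨j, ?_, ?_⟩
      · intro i hi
        rcases Nat.lt_or_ge i (k + 1) with hlt | hge
        · exact gle_trans (hub i (Nat.lt_succ_iff.mp hlt)) h2
        · have : i = k + 1 := le_antisymm hi hge
          rw [this]; exact h1
      · intro γ hγ
        exact h3 γ (hγ (k + 1) le_rfl) (hleast γ fun i hi => hγ i (hi.trans (Nat.le_succ k)))
  obtain ⟨β, hub, hleast⟩ := key (n - 1)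
  have hβQ : ∀ i, 1 ≤ i → i ≤ n → gle (α ^ i) β := by
    intro i h1i hin
    rcases eq_or_lt_of_le hin with heq | hlt
    · rw [heq, h]
      have h0 := hub 0 (Nat.zero_le _)
      rwa [pow_zero] at h0
    · exact hub i (by omega)
  have hβleast : ∀ γ, (∀ i, 1 ≤ i → i ≤ n → gle (α ^ i) γ) → gle β γ := by
    intro γ hγ
    apply hleast
    intro i hi
    rcases Nat.eq_zero_or_pos i with rfl | hpos
    · rw [pow_zero]
      have := hγ n hn le_rfl
      rwa [h] at this
    · exact hγ i hpos (by omega)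
  have hαβQ : ∀ i, 1 ≤ i → i ≤ n → gle (α ^ i) (α * β) := by
    intro i h1i hin
    have hpow : α ^ i = α * α ^ (i - 1) := by
      conv_lhs => rw [show i = (i - 1) + 1 from by omega]
      rw [pow_succ']
    rw [hpow]
    exact gle_mul_left α (hub (i - 1) (by omega))
  have hαβleast : ∀ γ, (∀ i, 1 ≤ i → i ≤ n → gle (α ^ i) γ) → gle (α * β) γ := by
    intro γ hγ
    have h1 : gle β (α⁻¹ * γ) := by
      apply hleast
      intro i hi
      obtain ⟨m, hm⟩ := hγ (i + 1) (by omega) (by omega)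
      refine ⟨m, ?_⟩
      rw [← hm, pow_succ']
      group
    obtain ⟨m, hm⟩ := h1
    exact ⟨m, by rw [mul_assoc, hm, ← mul_assoc, mul_inv_cancel, one_mul]⟩
  have e1 : gle (α * β) β := hαβleast β hβQ
  have e2 : gle β (α * β) := hβleast (α * β) hαβQ
  have hfix : α * β = β := gle_antisymm hM e1 e2
  exact mul_eq_right.mp hfix
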